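/- Let k be a field of odd characteristic and g ∈ k× a non-square. Let L be the free Lie algebra on x₁,…,x₄ over k, 𝔯₂ the ideal generated by x₁₂, x₃₄, x₁₄ − x₂₃, g·x₁₃ − x₂₄, and K₂ = (L/𝔯₂)/[[L/𝔯₂, L/𝔯₂], L/𝔯₂] the quotient by the third term of the lower central series. Then no nonzero element of K₂ has centralizer of k-dimension equal to 5. -/

import Mathlib

open FreeLieAlgebra


set_option linter.unusedVariables false
set_option maxHeartbeats 1000000

section ModelAlgebra

def bform {k : Type*} [Field k] (g : k) (a b : Fin 4 → k) : Fin 2 → k :=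
  ![a 0 * b 2 - a 2 * b 0 + g * (a 1 * b 3 - a 3 * b 1),
    a 0 * b 3 - a 3 * b 0 + (a 1 * b 2 - a 2 * b 1)]

def Mdl (k : Type*) (g : k) : Type _ := (Fin 4 → k) × (Fin 2 → k)

namespace Mdl
variable {k : Type*} [Field k] {g : k}

instance : AddCommGroup (Mdl k g) := inferInstanceAs (AddCommGroup ((Fin 4 → k) × (Fin 2 → k)))
instance : Module k (Mdl k g) := inferInstanceAs (Module k ((Fin 4 → k) × (Fin 2 → k)))
instance : Module.Finite k (Mdl k g) :=
  inferInstanceAs (Module.Finite k ((Fin 4 → k) × (Fin 2 → k)))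

lemma bform_add_left (g : k) (a a' b : Fin 4 → k) :
    bform g (a + a') b = bform g a b + bform g a' b := by
  funext i; fin_cases i <;> simp [bform] <;> ring

lemma bform_add_right (g : k) (a b b' : Fin 4 → k) :
    bform g a (b + b') = bform g a b + bform g a b' := by
  funext i; fin_cases i <;> simp [bform] <;> ring

lemma bform_smul_left (g : k) (t : k) (a b : Fin 4 → k) :
    bform g (t • a) b = t • bform g a b := by
  funext i; fin_cases i <;> simp [bform] <;> ring

lemma bform_smul_right (g : k) (t : k) (a b : Fin 4 → k) :
    bform g a (t • b) = t • bform g a b := by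
  funext i; fin_cases i <;> simp [bform] <;> ring

lemma bform_self (g : k) (a : Fin 4 → k) : bform g a a = 0 := by
  funext i; fin_cases i <;> simp [bform] <;> ring

lemma bform_zero_left (g : k) (b : Fin 4 → k) : bform g 0 b = 0 := by
  funext i; fin_cases i <;> simp [bform]

lemma bform_zero_right (g : k) (a : Fin 4 → k) : bform g a 0 = 0 := by
  funext i; fin_cases i <;> simp [bform]

instance : LieRing (Mdl k g) :=
  { (inferInstance : AddCommGroup (Mdl k g)) with
    bracket := fun u v => ((0, bform g u.1 v.1) : (Fin 4 → k) × (Fin 2 → k))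
    add_lie := by
      intro u v w
      show ((0, bform g (u.1 + v.1) w.1) : (Fin 4 → k) × (Fin 2 → k))
        = (0, bform g u.1 w.1) + (0, bform g v.1 w.1)
      simp [bform_add_left, Prod.ext_iff]
      exact ⟨(add_zero _).symm, rfl⟩
    lie_add := by
      intro u v w
      show ((0, bform g u.1 (v.1 + w.1)) : (Fin 4 → k) × (Fin 2 → k))
        = (0, bform g u.1 v.1) + (0, bform g u.1 w.1)
      simp [bform_add_right, Prod.ext_iff]
      exact ⟨(add_zero _).symm, rfl⟩
    lie_self := by
      intro u
      show ((0, bform g u.1 u.1) : (Fin 4 → k) × (Fin 2 → k)) = 0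
      simp [bform_self, Prod.ext_iff]
    leibniz_lie := by
      intro u v w
      show ((0, bform g u.1 (0 : (Fin 4 → k) × (Fin 2 → k)).1) : (Fin 4 → k) × (Fin 2 → k))
        = (0, bform g (0 : (Fin 4 → k) × (Fin 2 → k)).1 w.1)
          + (0, bform g v.1 (0 : (Fin 4 → k) × (Fin 2 → k)).1)
      simp [bform_zero_left, bform_zero_right, Prod.ext_iff]
      exact ⟨(add_zero _).symm, (add_zero _).symm⟩ }

instance : LieAlgebra k (Mdl k g) where
  lie_smul t u v := by
    show ((0, bform g u.1 (t • v.1)) : (Fin 4 → k) × (Fin 2 → k)) = t • (0, bform g u.1 v.1)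
    simp [bform_smul_right, Prod.ext_iff]
    exact ⟨(smul_zero _).symm, rfl⟩

lemma lie_def (u v : Mdl k g) :
    ⁅u, v⁆ = ((0, bform g u.1 v.1) : (Fin 4 → k) × (Fin 2 → k)) := rfl

/-- first projection as a linear map -/
def fstL (k : Type*) [Field k] (g : k) : Mdl k g →ₗ[k] (Fin 4 → k) :=
  { toFun := fun u => u.1, map_add' := fun _ _ => rfl, map_smul' := fun _ _ => rfl }

/-- second projection as a linear map -/
def sndL (k : Type*) [Field k] (g : k) : Mdl k g →ₗ[k] (Fin 2 → k) :=
  { toFun := fun u => u.2, map_add' := fun _ _ => rfl, map_smul' := fun _ _ => rfl }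

lemma finrank_eq : Module.finrank k (Mdl k g) = 6 := by
  have e : Mdl k g ≃ₗ[k] ((Fin 4 → k) × (Fin 2 → k)) := LinearEquiv.refl k _
  rw [e.finrank_eq, Module.finrank_prod, Module.finrank_pi, Module.finrank_pi]
  simp

lemma lcs2_eq_bot : LieModule.lowerCentralSeries k (Mdl k g) (Mdl k g) 2 = ⊥ := by
  let Z : LieIdeal k (Mdl k g) :=
    { carrier := {u : Mdl k g | u.1 = 0}
      add_mem' := fun {a b} ha hb => by
        show (a + b).1 = 0
        rw [show (a + b).1 = a.1 + b.1 from rfl, ha, hb, add_zero]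
      zero_mem' := rfl
      smul_mem' := fun t a ha => by
        show (t • a).1 = 0
        rw [show (t • a).1 = t • a.1 from rfl, ha, smul_zero]
      lie_mem := fun {x m} _ => rfl }
  have h1 : LieModule.lowerCentralSeries k (Mdl k g) (Mdl k g) 1 ≤ Z := by
    rw [show (1 : ℕ) = 0 + 1 from rfl, LieModule.lowerCentralSeries_succ]
    rw [LieSubmodule.lie_le_iff]
    intro xx _ m _
    exact rfl
  have h2 : LieModule.lowerCentralSeries k (Mdl k g) (Mdl k g) 2
      ≤ ⁅(⊤ : LieIdeal k (Mdl k g)), Z⁆ := by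
    rw [show (2 : ℕ) = 1 + 1 from rfl, LieModule.lowerCentralSeries_succ]
    exact LieSubmodule.mono_lie_right _ h1
  have h3 : ⁅(⊤ : LieIdeal k (Mdl k g)), Z⁆ ≤ ⊥ := by
    rw [LieSubmodule.lie_le_iff]
    intro xx _ m hm
    have hm' : m.1 = 0 := hm
    show ⁅xx, m⁆ ∈ (⊥ : LieIdeal k (Mdl k g))
    rw [LieSubmodule.mem_bot, lie_def, hm', bform_zero_right]
    rfl
  exact le_bot_iff.mp (h2.trans h3)

lemma finrank_ker_ad (hg : g ≠ 0) (hns : ∀ x : k, x ^ 2 ≠ g) (w : Mdl k g) :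
    Module.finrank k (LinearMap.ker (LieAlgebra.ad k (Mdl k g) w)) ≠ 5 := by
  have hquad : ∀ p q : k, ¬(p = 0 ∧ q = 0) → p ^ 2 - g * q ^ 2 ≠ 0 := by
    intro p q h hval
    by_cases hq : q = 0
    · subst hq
      refine h ⟨?_, rfl⟩
      have hp2 : p ^ 2 = 0 := by linear_combination hval
      exact pow_eq_zero_iff (n := 2) (by norm_num) |>.mp hp2
    · apply hns (p / q)
      rw [div_pow, div_eq_iff (pow_ne_zero 2 hq)]
      linear_combination hval
  by_cases hw : w.1 = 0
  · have hz : LieAlgebra.ad k (Mdl k g) w = 0 := by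
      ext u
      show ⁅w, u⁆ = 0
      rw [lie_def, hw, bform_zero_left]
      rfl
    rw [hz, LinearMap.ker_zero, finrank_top, finrank_eq]
    omega
  · let T : Mdl k g →ₗ[k] (Fin 2 → k) :=
      { toFun := fun u => bform g w.1 u.1
        map_add' := fun u v => bform_add_right g w.1 u.1 v.1
        map_smul' := fun t u => bform_smul_right g t w.1 u.1 }
    have hker : LinearMap.ker (LieAlgebra.ad k (Mdl k g) w) = LinearMap.ker T := by
      ext u
      simp only [LinearMap.mem_ker, LieAlgebra.ad_apply]
      constructor
      · intro h
        exact congrArg Prod.snd h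
      · intro h
        rw [lie_def]
        show ((0, bform g w.1 u.1) : (Fin 4 → k) × (Fin 2 → k)) = 0
        rw [show bform g w.1 u.1 = 0 from h]
        rfl
    have hsurj : Function.Surjective T := by
      intro c
      by_cases h01 : w.1 0 = 0 ∧ w.1 1 = 0
      · have h23 : ¬(w.1 2 = 0 ∧ w.1 3 = 0) := by
          intro h
          apply hw
          funext m
          fin_cases m
          · exact h01.1
          · exact h01.2
          · exact h.1
          · exact h.2
        have hd : w.1 2 ^ 2 - g * w.1 3 ^ 2 ≠ 0 := hquad _ _ h23
        refine ⟨((![-(w.1 2 * c 0 - g * w.1 3 * c 1) / (w.1 2 ^ 2 - g * w.1 3 ^ 2),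
            -(w.1 2 * c 1 - w.1 3 * c 0) / (w.1 2 ^ 2 - g * w.1 3 ^ 2), 0, 0], 0)
            : (Fin 4 → k) × (Fin 2 → k)), ?_⟩
        show bform g w.1 _ = c
        funext m
        obtain ⟨e0, e1⟩ := h01
        have hd' : w.1 2 ^ 2 - w.1 3 ^ 2 * g ≠ 0 := by
          rw [mul_comm]; exact hd
        fin_cases m <;>
          · simp [bform, e0, e1]
            field_simp
            ring
      · have hd : w.1 0 ^ 2 - g * w.1 1 ^ 2 ≠ 0 := hquad _ _ h01
        refine ⟨((![0, 0, (w.1 0 * c 0 - g * w.1 1 * c 1) / (w.1 0 ^ 2 - g * w.1 1 ^ 2),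
            (w.1 0 * c 1 - w.1 1 * c 0) / (w.1 0 ^ 2 - g * w.1 1 ^ 2)], 0)
            : (Fin 4 → k) × (Fin 2 → k)), ?_⟩
        show bform g w.1 _ = c
        funext m
        have hd' : w.1 0 ^ 2 - w.1 1 ^ 2 * g ≠ 0 := by
          rw [mul_comm]; exact hd
        fin_cases m <;>
          · simp [bform]
            field_simp
            ring
    have h1 := LinearMap.finrank_range_add_finrank_ker T
    rw [LinearMap.range_eq_top.mpr hsurj, finrank_top, finrank_eq, Module.finrank_pi] at h1
    rw [hker]
    simp only [Fintype.card_fin] at h1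
    omega

end Mdl

end ModelAlgebra


/-- let `k` be a field of odd characteristic, `g ∈ k×` a non-square,
`L` the free Lie algebra on `x₁,…,x₄`, `𝔯₂ = (x₁₂, x₃₄, x₁₄ − x₂₃, g x₁₃ − x₂₄)` and
`K₂ = (L/𝔯₂)/[[L/𝔯₂,L/𝔯₂],L/𝔯₂]` the class-2 quotient. Then no nonzero element of
`K₂` has centralizer of `k`-dimension `5`. -/
theorem no_five_dimensional_centralizer
    {k : Type*} [Field k] (hodd : Odd (ringChar k))
    (g : k) (hg : g ≠ 0) (hns : ∀ x : k, x ^ 2 ≠ g) :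
    let L := FreeLieAlgebra k (Fin 4)
    let x : Fin 4 → L := FreeLieAlgebra.of k
    let r2 : LieIdeal k L := LieSubmodule.lieSpan k L
      {⁅x 0, x 1⁆, ⁅x 2, x 3⁆, ⁅x 0, x 3⁆ - ⁅x 1, x 2⁆, g • ⁅x 0, x 2⁆ - ⁅x 1, x 3⁆}
    ∀ v : (L ⧸ r2) ⧸ LieModule.lowerCentralSeries k (L ⧸ r2) (L ⧸ r2) 2, v ≠ 0 →
      Module.finrank k
        (LinearMap.ker (LieAlgebra.ad k ((L ⧸ r2) ⧸ LieModule.lowerCentralSeries k (L ⧸ r2) (L ⧸ r2) 2) v)) ≠ 5 := by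
  intro L x r2 v _hv
  classical
  let q1 : L →ₗ⁅k⁆ L ⧸ r2 := { r2.toSubmodule.mkQ with map_lie' := rfl }
  let N := LieModule.lowerCentralSeries k (L ⧸ r2) (L ⧸ r2) 2
  let q2 : (L ⧸ r2) →ₗ⁅k⁆ (L ⧸ r2) ⧸ N := { N.toSubmodule.mkQ with map_lie' := rfl }
  let q : L →ₗ⁅k⁆ (L ⧸ r2) ⧸ N := q2.comp q1
  have hq1surj : Function.Surjective q1 := Submodule.Quotient.mk_surjective _
  have hq2surj : Function.Surjective q2 := Submodule.Quotient.mk_surjective _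
  have hqsurj : Function.Surjective q := hq2surj.comp hq1surj
  -- the model hom
  let φ : L →ₗ⁅k⁆ Mdl k g :=
    FreeLieAlgebra.lift k fun i => ((Pi.single i 1, 0) : (Fin 4 → k) × (Fin 2 → k))
  have hφx : ∀ i, φ (x i) = ((Pi.single i 1, 0) : (Fin 4 → k) × (Fin 2 → k)) := fun i =>
    FreeLieAlgebra.lift_of_apply _ i
  have hb : ∀ i j : Fin 4, φ ⁅x i, x j⁆
      = ((0, bform g (Pi.single i 1) (Pi.single j 1)) : (Fin 4 → k) × (Fin 2 → k)) := by
    intro i j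
    rw [LieHom.map_lie, hφx, hφx]
    rfl
  -- values of bform on basis vectors
  have hb01 : bform g (Pi.single (0 : Fin 4) (1:k)) (Pi.single 1 1) = 0 := by
    funext m; fin_cases m <;> simp [bform, Pi.single_apply]
  have hb23 : bform g (Pi.single (2 : Fin 4) (1:k)) (Pi.single 3 1) = 0 := by
    funext m; fin_cases m <;> simp [bform, Pi.single_apply]
  have hb03 : bform g (Pi.single (0 : Fin 4) (1:k)) (Pi.single 3 1) = Pi.single 1 1 := by
    funext m; fin_cases m <;> simp [bform, Pi.single_apply]
  have hb12 : bform g (Pi.single (1 : Fin 4) (1:k)) (Pi.single 2 1) = Pi.single 1 1 := by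
    funext m; fin_cases m <;> simp [bform, Pi.single_apply]
  have hb02 : bform g (Pi.single (0 : Fin 4) (1:k)) (Pi.single 2 1) = Pi.single 0 1 := by
    funext m; fin_cases m <;> simp [bform, Pi.single_apply]
  have hb13 : bform g (Pi.single (1 : Fin 4) (1:k)) (Pi.single 3 1) = g • (Pi.single 0 1 : Fin 2 → k) := by
    funext m; fin_cases m <;> simp [bform, Pi.single_apply]
  -- φ kills the relations
  have hrel1 : φ ⁅x 0, x 1⁆ = 0 := by
    rw [hb, hb01]; rfl
  have hrel2 : φ ⁅x 2, x 3⁆ = 0 := by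
    rw [hb, hb23]; rfl
  have hrel3 : φ (⁅x 0, x 3⁆ - ⁅x 1, x 2⁆) = 0 := by
    rw [map_sub, hb, hb, hb03, hb12]; exact sub_self _
  have hrel4 : φ (g • ⁅x 0, x 2⁆ - ⁅x 1, x 3⁆) = 0 := by
    rw [map_sub, map_smul, hb, hb, hb02, hb13]
    exact sub_eq_zero.mpr (Prod.ext (smul_zero g) rfl)
  have hr2ker : r2 ≤ φ.ker := by
    apply LieSubmodule.lieSpan_le.mpr
    rintro y hy
    simp only [Set.mem_insert_iff, Set.mem_singleton_iff] at hy
    rcases hy with rfl | rfl | rfl | rfl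
    · exact LieHom.mem_ker.mpr hrel1
    · exact LieHom.mem_ker.mpr hrel2
    · exact LieHom.mem_ker.mpr hrel3
    · exact LieHom.mem_ker.mpr hrel4
  -- φ kills the second lower central series term
  have hφlcs : ∀ y ∈ LieModule.lowerCentralSeries k L L 2, φ y = 0 := by
    intro y hy
    have h1 : φ y ∈ LieIdeal.map φ (LieModule.lowerCentralSeries k L L 2) :=
      LieIdeal.mem_map hy
    have h2 := LieIdeal.map_lowerCentralSeries_le (R := k) (L := L) (L' := Mdl k g) 2 (f := φ) h1
    rw [Mdl.lcs2_eq_bot] at h2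
    simpa using h2
  -- descend to a linear map on the quotient
  have hr2ker' : r2.toSubmodule ≤ LinearMap.ker (φ : L →ₗ[k] Mdl k g) := fun y hy =>
    LinearMap.mem_ker.mpr (LieHom.mem_ker.mp (hr2ker hy))
  let π1 : (L ⧸ r2) →ₗ[k] Mdl k g := Submodule.liftQ r2.toSubmodule (φ : L →ₗ[k] Mdl k g) hr2ker'
  have hπ1 : ∀ u, π1 (q1 u) = φ u := fun u => rfl
  have hNker : N.toSubmodule ≤ LinearMap.ker π1 := by
    intro m hm
    have hm' : m ∈ LieIdeal.map q1 (LieModule.lowerCentralSeries k L L 2) := by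
      rw [LieIdeal.lowerCentralSeries_map_eq 2 hq1surj]
      exact hm
    rw [← LieSubmodule.mem_toSubmodule, LieIdeal.coe_map_of_surjective hq1surj] at hm'
    obtain ⟨y, hy, rfl⟩ := hm'
    exact LinearMap.mem_ker.mpr (hφlcs y hy)
  let π : ((L ⧸ r2) ⧸ N) →ₗ[k] Mdl k g := Submodule.liftQ N.toSubmodule π1 hNker
  have hπq : ∀ u, π (q u) = φ u := fun u => rfl
  -- spanning elements
  let s : Fin 4 ⊕ Fin 2 → ((L ⧸ r2) ⧸ N) :=
    Sum.elim (fun i => q (x i)) ![q ⁅x 0, x 2⁆, q ⁅x 0, x 3⁆]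
  let E : Fin 4 ⊕ Fin 2 → Mdl k g :=
    Sum.elim (fun i => ((Pi.single i 1, 0) : (Fin 4 → k) × (Fin 2 → k)))
      (fun j => ((0, Pi.single j 1) : (Fin 4 → k) × (Fin 2 → k)))
  have hπs : ∀ p, π (s p) = E p := by
    rintro (i | j)
    · show π (q (x i)) = _
      rw [hπq, hφx]
      rfl
    · fin_cases j
      · show π (q ⁅x 0, x 2⁆) = ((0, Pi.single 0 1) : (Fin 4 → k) × (Fin 2 → k))
        rw [hπq, hb, hb02]
      · show π (q ⁅x 0, x 3⁆) = ((0, Pi.single 1 1) : (Fin 4 → k) × (Fin 2 → k))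
        rw [hπq, hb, hb03]
  -- linear independence of E
  have hsum4 : ∀ (c : Fin 4 → k) (m : Fin 4), (∑ j, c j • (Pi.single j 1 : Fin 4 → k)) m = c m := by
    intro c m
    rw [Finset.sum_apply]
    simp [Pi.single_apply]
  have hsum2 : ∀ (c : Fin 2 → k) (m : Fin 2), (∑ j, c j • (Pi.single j 1 : Fin 2 → k)) m = c m := by
    intro c m
    rw [Finset.sum_apply]
    simp [Pi.single_apply]
  have hE : LinearIndependent k E := by
    rw [Fintype.linearIndependent_iff]
    intro c hc
    have hc1 := congrArg (Mdl.fstL k g) hc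
    have hc2 := congrArg (Mdl.sndL k g) hc
    rw [map_sum, map_zero] at hc1 hc2
    simp only [map_smul] at hc1 hc2
    rw [Fintype.sum_sum_type] at hc1 hc2
    have e1 : ∀ i : Fin 4, c (Sum.inl i) = 0 := by
      intro i
      have h1 : (∑ j : Fin 4, c (Sum.inl j) • (Pi.single j 1 : Fin 4 → k)) = 0 := by
        have hc1' : (∑ j : Fin 4, c (Sum.inl j) • (Pi.single j 1 : Fin 4 → k))
            + ∑ j : Fin 2, c (Sum.inr j) • (0 : Fin 4 → k) = 0 := hc1
        simpa using hc1'
      have := congrFun h1 i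
      rwa [hsum4] at this
    have e2 : ∀ j : Fin 2, c (Sum.inr j) = 0 := by
      intro j
      have h2 : (∑ i : Fin 2, c (Sum.inr i) • (Pi.single i 1 : Fin 2 → k)) = 0 := by
        have hc2' : (∑ j : Fin 4, c (Sum.inl j) • (0 : Fin 2 → k))
            + ∑ j : Fin 2, c (Sum.inr j) • (Pi.single j 1 : Fin 2 → k) = 0 := hc2
        simpa using hc2'
      have := congrFun h2 j
      rwa [hsum2] at this
    rintro (i | j)
    · exact e1 i
    · exact e2 j
  -- centrality of degree-2 elements
  have h1eq : LieModule.lowerCentralSeries k (L ⧸ r2) (L ⧸ r2) 1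
      = ⁅(⊤ : LieIdeal k (L ⧸ r2)), (⊤ : LieIdeal k (L ⧸ r2))⁆ := by
    rw [show (1 : ℕ) = 0 + 1 from rfl, LieModule.lowerCentralSeries_succ,
      LieModule.lowerCentralSeries_zero]
  have hcentral : ∀ (u : (L ⧸ r2) ⧸ N) (m : L ⧸ r2),
      m ∈ LieModule.lowerCentralSeries k (L ⧸ r2) (L ⧸ r2) 1 → ⁅u, q2 m⁆ = 0 := by
    intro u m hm
    obtain ⟨n, rfl⟩ := hq2surj u
    rw [← q2.map_lie]
    have h2 : ⁅n, m⁆ ∈ N := by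
      have hNe : N = ⁅(⊤ : LieIdeal k (L ⧸ r2)),
          LieModule.lowerCentralSeries k (L ⧸ r2) (L ⧸ r2) 1⁆ := by
        rw [show N = LieModule.lowerCentralSeries k (L ⧸ r2) (L ⧸ r2) 2 from rfl,
          show (2 : ℕ) = 1 + 1 from rfl, LieModule.lowerCentralSeries_succ]
      rw [hNe]
      exact LieSubmodule.lie_mem_lie (LieSubmodule.mem_top _) hm
    exact (LieSubmodule.Quotient.mk_eq_zero').mpr h2
  have hmem1 : ∀ a b : L, q1 ⁅a, b⁆ ∈ LieModule.lowerCentralSeries k (L ⧸ r2) (L ⧸ r2) 1 := by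
    intro a b
    rw [LieHom.map_lie, h1eq]
    exact LieSubmodule.lie_mem_lie (LieSubmodule.mem_top _) (LieSubmodule.mem_top _)
  have hzc : ∀ (u : (L ⧸ r2) ⧸ N) (a b : L), ⁅u, q ⁅a, b⁆⁆ = 0 := fun u a b =>
    hcentral u _ (hmem1 a b)
  -- q kills the relations
  have hq0 : ∀ u ∈ r2, q u = 0 := by
    intro u hu
    show q2 (q1 u) = 0
    have h : q1 u = 0 := (LieSubmodule.Quotient.mk_eq_zero').mpr hu
    rw [h, map_zero]
  have h1mem : ⁅x 0, x 1⁆ ∈ ({⁅x 0, x 1⁆, ⁅x 2, x 3⁆, ⁅x 0, x 3⁆ - ⁅x 1, x 2⁆,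
      g • ⁅x 0, x 2⁆ - ⁅x 1, x 3⁆} : Set L) := Set.mem_insert _ _
  have h2mem : ⁅x 2, x 3⁆ ∈ ({⁅x 0, x 1⁆, ⁅x 2, x 3⁆, ⁅x 0, x 3⁆ - ⁅x 1, x 2⁆,
      g • ⁅x 0, x 2⁆ - ⁅x 1, x 3⁆} : Set L) := Set.mem_insert_of_mem _ (Set.mem_insert _ _)
  have h3mem : ⁅x 0, x 3⁆ - ⁅x 1, x 2⁆ ∈ ({⁅x 0, x 1⁆, ⁅x 2, x 3⁆, ⁅x 0, x 3⁆ - ⁅x 1, x 2⁆,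
      g • ⁅x 0, x 2⁆ - ⁅x 1, x 3⁆} : Set L) :=
    Set.mem_insert_of_mem _ (Set.mem_insert_of_mem _ (Set.mem_insert _ _))
  have h4mem : g • ⁅x 0, x 2⁆ - ⁅x 1, x 3⁆ ∈ ({⁅x 0, x 1⁆, ⁅x 2, x 3⁆, ⁅x 0, x 3⁆ - ⁅x 1, x 2⁆,
      g • ⁅x 0, x 2⁆ - ⁅x 1, x 3⁆} : Set L) :=
    Set.mem_insert_of_mem _ (Set.mem_insert_of_mem _ (Set.mem_insert_of_mem _ rfl))
  have e12 : q ⁅x 1, x 2⁆ = q ⁅x 0, x 3⁆ := by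
    have h := hq0 _ (LieSubmodule.subset_lieSpan h3mem)
    rw [map_sub] at h
    exact (sub_eq_zero.mp h).symm
  have e13 : q ⁅x 1, x 3⁆ = g • q ⁅x 0, x 2⁆ := by
    have h := hq0 _ (LieSubmodule.subset_lieSpan h4mem)
    rw [map_sub, map_smul] at h
    exact (sub_eq_zero.mp h).symm
  -- the span of the six elements
  set W : Submodule k ((L ⧸ r2) ⧸ N) := Submodule.span k (Set.range s) with hW
  have hz1W : q ⁅x 0, x 2⁆ ∈ W := Submodule.subset_span ⟨Sum.inr 0, rfl⟩
  have hz2W : q ⁅x 0, x 3⁆ ∈ W := Submodule.subset_span ⟨Sum.inr 1, rfl⟩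
  have hqlie : ∀ i j : Fin 4, q ⁅x i, x j⁆ ∈ W := by
    have hdiag : ∀ a : L, q ⁅a, a⁆ ∈ W := by
      intro a
      rw [lie_self, map_zero]
      exact Submodule.zero_mem _
    have hswap : ∀ a b : L, q ⁅a, b⁆ ∈ W → q ⁅b, a⁆ ∈ W := by
      intro a b h
      rw [show ⁅b, a⁆ = -⁅a, b⁆ from (neg_eq_iff_eq_neg.mp (lie_skew a b)).symm ▸ rfl]
      rw [map_neg]
      exact Submodule.neg_mem _ h
    have h01W : q ⁅x 0, x 1⁆ ∈ W := by
      rw [hq0 _ (LieSubmodule.subset_lieSpan h1mem)]; exact Submodule.zero_mem _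
    have h23W : q ⁅x 2, x 3⁆ ∈ W := by
      rw [hq0 _ (LieSubmodule.subset_lieSpan h2mem)]; exact Submodule.zero_mem _
    have h12W : q ⁅x 1, x 2⁆ ∈ W := by rw [e12]; exact hz2W
    have h13W : q ⁅x 1, x 3⁆ ∈ W := by rw [e13]; exact Submodule.smul_mem _ g hz1W
    intro i j
    fin_cases i <;> fin_cases j
    · exact hdiag _
    · exact h01W
    · exact hz1W
    · exact hz2W
    · exact hswap _ _ h01W
    · exact hdiag _
    · exact h12W
    · exact h13W
    · exact hswap _ _ hz1W
    · exact hswap _ _ h12W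
    · exact hdiag _
    · exact h23W
    · exact hswap _ _ hz2W
    · exact hswap _ _ h13W
    · exact hswap _ _ h23W
    · exact hdiag _
  have hyy : ∀ p p' : Fin 4 ⊕ Fin 2, ⁅s p, s p'⁆ ∈ W := by
    have hcentR : ∀ (u : (L ⧸ r2) ⧸ N) (j : Fin 2), ⁅u, s (Sum.inr j)⁆ = 0 := by
      intro u j
      fin_cases j
      · exact hzc u (x 0) (x 2)
      · exact hzc u (x 0) (x 3)
    rintro (i | j) (i' | j')
    · show ⁅q (x i), q (x i')⁆ ∈ W
      rw [← LieHom.map_lie]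
      exact hqlie i i'
    · rw [hcentR _ j']
      exact Submodule.zero_mem _
    · rw [← lie_skew, hcentR, neg_zero]
      exact Submodule.zero_mem _
    · rw [← lie_skew, hcentR, neg_zero]
      exact Submodule.zero_mem _
  have hWbr : ∀ u ∈ W, ∀ w ∈ W, ⁅u, w⁆ ∈ W := by
    intro u hu w hw
    refine Submodule.span_induction₂ (p := fun a b _ _ => ⁅a, b⁆ ∈ W)
      ?_ ?_ ?_ ?_ ?_ ?_ ?_ hu hw
    · rintro _ _ ⟨p, rfl⟩ ⟨p', rfl⟩
      exact hyy p p'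
    · intro y _
      show ⁅(0 : (L ⧸ r2) ⧸ N), y⁆ ∈ W
      rw [zero_lie]; exact Submodule.zero_mem _
    · intro a _
      have h0 : ⁅a, (0 : (L ⧸ r2) ⧸ N)⁆ = 0 := lie_zero a
      rw [h0]; exact Submodule.zero_mem _
    · intro a b cc _ _ _ hx1 hx2
      show ⁅a + b, cc⁆ ∈ W
      rw [add_lie]; exact Submodule.add_mem _ hx1 hx2
    · intro a b cc _ _ _ hx1 hx2
      have h0 : ⁅a, b + cc⁆ = ⁅a, b⁆ + ⁅a, cc⁆ := lie_add a b cc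
      show ⁅a, b + cc⁆ ∈ W
      rw [h0]; exact Submodule.add_mem _ hx1 hx2
    · intro t a b _ _ hx1
      show ⁅t • a, b⁆ ∈ W
      rw [smul_lie]; exact Submodule.smul_mem _ _ hx1
    · intro t a b _ _ hx1
      have h0 : ⁅a, t • b⁆ = t • ⁅a, b⁆ := lie_smul t a b
      show ⁅a, t • b⁆ ∈ W
      rw [h0]; exact Submodule.smul_mem _ _ hx1
  -- every element lies in the span of the six elements
  have hspan : ∀ u : (L ⧸ r2) ⧸ N, u ∈ W := by
    let CD : LieSubalgebra k ((L ⧸ r2) ⧸ N) :=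
      { W with lie_mem' := fun {a b} ha hb => hWbr a ha b hb }
    let A : LieSubalgebra k L := LieSubalgebra.lieSpan k L (Set.range x)
    have hA : ∀ a : L, a ∈ A := by
      let h : L →ₗ⁅k⁆ A :=
        FreeLieAlgebra.lift k fun i => ⟨x i, LieSubalgebra.subset_lieSpan ⟨i, rfl⟩⟩
      have hcomp : A.incl.comp h = (LieHom.id : L →ₗ⁅k⁆ L) := by
        apply FreeLieAlgebra.hom_ext
        intro i
        show A.incl (h (of k i)) = of k i
        rw [show h (of k i) = ⟨x i, LieSubalgebra.subset_lieSpan ⟨i, rfl⟩⟩ from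
          FreeLieAlgebra.lift_of_apply _ i]
        rfl
      intro a
      have h2 : A.incl (h a) = a := LieHom.congr_fun hcomp a
      exact h2 ▸ (h a).2
    intro u
    obtain ⟨a, rfl⟩ := hqsurj u
    have hle : A ≤ LieSubalgebra.comap q CD := by
      apply LieSubalgebra.lieSpan_le.mpr
      rintro _ ⟨i, rfl⟩
      show q (x i) ∈ CD
      exact Submodule.subset_span ⟨Sum.inl i, rfl⟩
    exact hle (hA a)
  -- basis of the quotient
  have hs_ind : LinearIndependent k s := LinearIndependent.of_comp π (by
    have hps : π ∘ s = E := funext hπs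
    rw [hps]; exact hE)
  have hs_span : ⊤ ≤ Submodule.span k (Set.range s) := fun u _ => hspan u
  let b : Module.Basis (Fin 4 ⊕ Fin 2) k ((L ⧸ r2) ⧸ N) := Module.Basis.mk hs_ind hs_span
  have hπinj : Function.Injective π := by
    rw [← LinearMap.ker_eq_bot]
    rw [Submodule.eq_bot_iff]
    intro u hu
    have hu' : π u = 0 := hu
    have hrepr : ∑ p, b.repr u p • b p = u := b.sum_repr u
    have hsum : ∑ p, b.repr u p • E p = 0 := by
      have h3 : π (∑ p, b.repr u p • b p) = 0 := by rw [hrepr]; exact hu'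
      rw [map_sum] at h3
      simp only [map_smul] at h3
      have h4 : ∀ p, π (b p) = E p := by
        intro p
        rw [show b p = s p from Module.Basis.mk_apply hs_ind hs_span p]
        exact hπs p
      simp only [h4] at h3
      exact h3
    have hc := Fintype.linearIndependent_iff.mp hE _ hsum
    rw [← hrepr]
    simp only [hc, zero_smul]
    exact Finset.sum_const_zero
  haveI : FiniteDimensional k ((L ⧸ r2) ⧸ N) := b.finiteDimensional_of_finite
  have hfinK : Module.finrank k ((L ⧸ r2) ⧸ N) = 6 := by
    rw [Module.finrank_eq_card_basis b]
    simp
  have hπsurj : Function.Surjective π :=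
    (LinearMap.injective_iff_surjective_of_finrank_eq_finrank
      (by rw [hfinK, Mdl.finrank_eq])).mp hπinj
  let eπ : ((L ⧸ r2) ⧸ N) ≃ₗ[k] Mdl k g := LinearEquiv.ofBijective π ⟨hπinj, hπsurj⟩
  have hcm : ∀ u w : (L ⧸ r2) ⧸ N, π ⁅u, w⁆ = ⁅π u, π w⁆ := by
    intro u w
    obtain ⟨a, rfl⟩ := hqsurj u
    obtain ⟨bb, rfl⟩ := hqsurj w
    rw [← LieHom.map_lie, hπq, hπq, hπq, LieHom.map_lie]
  have hkereq : LinearMap.ker (LieAlgebra.ad k ((L ⧸ r2) ⧸ N) v)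
      = Submodule.map (eπ.symm : Mdl k g →ₗ[k] ((L ⧸ r2) ⧸ N))
        (LinearMap.ker (LieAlgebra.ad k (Mdl k g) (π v))) := by
    ext u
    rw [Submodule.mem_map_equiv]
    simp only [LinearMap.mem_ker, LieAlgebra.ad_apply, LinearEquiv.symm_symm]
    rw [show (eπ u : Mdl k g) = π u from rfl]
    constructor
    · intro h
      rw [← hcm, h, map_zero]
    · intro h
      apply hπinj
      rw [hcm, h, map_zero]
  rw [hkereq, LinearEquiv.finrank_map_eq]
  exact Mdl.finrank_ker_ad hg hns (π v)
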